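/- Let r ≥ 3 be an integer. There exists α0 = α0(r) > 0 such that for every α ∈ (0, α0] there exists n0 ∈ ℕ with the following property for all n ≥ n0. If G is an n-vertex graph containing no copy of K_r (i.e., no r vertices of G induce a complete graph) and σ(G) ≥ 2(1 − 1/(r−1) − 2α)n, then G contains an independent set of size at least (1/(r−1) − 3rα)n. -/

import Mathlib

open Finset


/-- Let `r ≥ 3`. There exists `α0 = α0(r) > 0` such that for every `α ∈ (0, α0]` there
exists `n0` such that for all `n ≥ n0`: if `G` is an `n`-vertex `K_r`-free graph with
`σ(G) ≥ 2(1 - 1/(r-1) - 2α)n`, then `G` contains an independent set of size at least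
`(1/(r-1) - 3rα)n`. -/
theorem statement7 (r : ℕ) (hr : 3 ≤ r) :
    ∃ α0 : ℝ, 0 < α0 ∧ ∀ α : ℝ, 0 < α → α ≤ α0 →
      ∃ n0 : ℕ, ∀ n : ℕ, n0 ≤ n →
        ∀ (G : SimpleGraph (Fin n)) [DecidableRel G.Adj],
          G.CliqueFree r →
          (∀ x y : Fin n, x ≠ y → ¬ G.Adj x y →
            2 * (1 - 1 / ((r : ℝ) - 1) - 2 * α) * (n : ℝ) ≤
              (G.degree x : ℝ) + (G.degree y : ℝ)) →
          ∃ S : Finset (Fin n),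
            (1 / ((r : ℝ) - 1) - 3 * (r : ℝ) * α) * (n : ℝ) ≤ (S.card : ℝ) ∧
            ∀ u ∈ S, ∀ v ∈ S, ¬ G.Adj u v := by
  classical
  have hr3 : (3:ℝ) ≤ (r:ℝ) := by exact_mod_cast hr
  set K : ℝ := (r:ℝ) - 1 with hKdef
  have hK2 : (2:ℝ) ≤ K := by simp only [hKdef]; linarith
  have hK0 : (0:ℝ) < K := by linarith
  refine ⟨1/(4*K^2), by positivity, ?_⟩
  intro α hα hα0
  refine ⟨max (2*(r-1)^2 + 1) ⌈(2:ℝ)/α⌉₊, ?_⟩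
  intro n hn G _ hfree hσ
  have hKcast : ((r-1 : ℕ) : ℝ) = K := by
    have : (1:ℕ) ≤ r := by omega
    push_cast [this]; ring
  have hn1 : (2:ℝ)*K^2 + 1 ≤ (n:ℝ) := by
    have h1 : 2*(r-1)^2 + 1 ≤ n := le_trans (le_max_left _ _) hn
    have : ((2*(r-1)^2 + 1 : ℕ) : ℝ) ≤ (n:ℝ) := by exact_mod_cast h1
    push_cast at this
    rw [hKcast] at this
    linarith
  have hn2 : (2:ℝ) ≤ α * n := by
    have h1 : ⌈(2:ℝ)/α⌉₊ ≤ n := le_trans (le_max_right _ _) hn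
    have h2 : (2:ℝ)/α ≤ n := Nat.ceil_le.mp h1
    calc (2:ℝ) = α * (2/α) := by field_simp
    _ ≤ α * n := by apply mul_le_mul_of_nonneg_left h2 hα.le
  set d : ℝ := (1 - 1/K - 2*α) * n with hd
  -- any clique has at most r-1 vertices
  have hcl : ∀ s : Finset (Fin n), G.IsClique ↑s → s.card ≤ r - 1 := by
    intro s hs
    by_contra h
    obtain ⟨t, hts, htc⟩ := Finset.exists_subset_card_eq (s := s) (n := r) (by omega)
    exact hfree t ⟨hs.subset (Finset.coe_subset.mpr hts), htc⟩
  -- the set of high-degree vertices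
  set H : Finset (Fin n) := univ.filter (fun x => d ≤ (G.degree x : ℝ)) with hHdef
  have hHdeg : ∀ x ∈ H, d ≤ (G.degree x : ℝ) := by
    intro x hx; exact (mem_filter.mp hx).2
  have hHcard : (n:ℝ) - K ≤ (H.card : ℝ) := by
    have hLcl : G.IsClique ↑(univ.filter (fun x => ¬ d ≤ (G.degree x : ℝ))) := by
      intro x hx y hy hxy
      simp only [coe_filter, Set.mem_setOf_eq, mem_univ, true_and, not_le] at hx hy
      by_contra hadj
      have := hσ x y hxy hadj
      rw [hd] at hx hy
      nlinarith [this]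
    have h1 := hcl _ hLcl
    have h2 := Finset.card_filter_add_card_filter_not
      (s := (univ : Finset (Fin n))) (p := fun x => d ≤ (G.degree x : ℝ))
    rw [Finset.card_univ, Fintype.card_fin] at h2
    have heq : (univ.filter (fun x => d ≤ (G.degree x:ℝ))).card = H.card := by rw [hHdef]
    have h3 : n ≤ H.card + (r-1) := by omega
    have h4 : (n:ℝ) ≤ (H.card:ℝ) + K := by
      have := (Nat.cast_le (α := ℝ)).mpr h3
      push_cast at this
      rw [← hKcast]; exact_mod_cast this
    linarith
  -- a maximum clique among high-degree vertices
  set P : Finset (Finset (Fin n)) :=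
    H.powerset.filter (fun s => G.IsClique ((s : Finset (Fin n)) : Set (Fin n))) with hPdef
  have hne : P.Nonempty := ⟨∅, by simp [hPdef]⟩
  obtain ⟨C, hCmem, hCmax⟩ := Finset.exists_max_image P Finset.card hne
  rw [hPdef] at hCmem hCmax
  rw [mem_filter, mem_powerset] at hCmem
  obtain ⟨hCH, hC⟩ := hCmem
  have hkle : C.card ≤ r - 1 := hcl C hC
  -- every high vertex has a non-neighbor in C
  have hcov : ∀ u ∈ H, ∃ v ∈ C, ¬ G.Adj u v := by
    intro u hu
    by_cases huC : u ∈ C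
    · exact ⟨u, huC, G.irrefl⟩
    · by_contra hcon
      push_neg at hcon
      have hclq : G.IsClique ↑(insert u C) := by
        rw [coe_insert]
        exact hC.insert (fun b hb _ => hcon b hb)
      have hmem : insert u C ∈ H.powerset.filter (fun s => G.IsClique ((s : Finset (Fin n)) : Set (Fin n))) := by
        rw [mem_filter, mem_powerset]
        exact ⟨insert_subset hu hCH, hclq⟩
      have := hCmax _ hmem
      rw [card_insert_of_notMem huC] at this
      omega
  -- counting non-neighbors
  have hnonadj : ∀ v ∈ C, ((H.filter (fun u => ¬ G.Adj u v)).card : ℝ) ≤ (n:ℝ) - d := by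
    intro v hv
    have h1 : (univ.filter (fun u => G.Adj u v)).card = G.degree v := by
      rw [← SimpleGraph.card_neighborFinset_eq_degree, SimpleGraph.neighborFinset_eq_filter]
      congr 1
      ext u
      simp [SimpleGraph.adj_comm]
    have h2 := Finset.card_filter_add_card_filter_not
      (s := (univ : Finset (Fin n))) (p := fun u => G.Adj u v)
    rw [Finset.card_univ, Fintype.card_fin, h1] at h2
    have h3 : (H.filter (fun u => ¬ G.Adj u v)).card ≤ (univ.filter (fun u => ¬ G.Adj u v)).card :=
      Finset.card_le_card (Finset.filter_subset_filter _ (Finset.subset_univ H))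
    have h4 : (G.degree v : ℝ) ≥ d := hHdeg v (hCH hv)
    have h5 : ((univ.filter (fun u => ¬ G.Adj u v)).card : ℝ) = (n:ℝ) - G.degree v := by
      have : (univ.filter (fun u => ¬ G.Adj u v)).card = n - G.degree v := by omega
      rw [this]
      have : G.degree v ≤ n := by omega
      push_cast [this]
      ring
    calc ((H.filter (fun u => ¬ G.Adj u v)).card : ℝ)
        ≤ ((univ.filter (fun u => ¬ G.Adj u v)).card : ℝ) := by exact_mod_cast h3
      _ = (n:ℝ) - G.degree v := h5
      _ ≤ (n:ℝ) - d := by linarith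
  -- double counting
  have hsum : ∑ u ∈ H, (C.filter (fun v => ¬ G.Adj u v)).card
      = ∑ v ∈ C, (H.filter (fun u => ¬ G.Adj u v)).card := by
    simp_rw [Finset.card_filter]
    exact Finset.sum_comm
  have hsumle : ((∑ u ∈ H, (C.filter (fun v => ¬ G.Adj u v)).card : ℕ) : ℝ) ≤ (C.card : ℝ) * ((n:ℝ) - d) := by
    rw [hsum]
    push_cast
    calc (∑ v ∈ C, ((H.filter (fun u => ¬ G.Adj u v)).card : ℝ))
        ≤ ∑ v ∈ C, ((n:ℝ) - d) := Finset.sum_le_sum hnonadj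
      _ = (C.card : ℝ) * ((n:ℝ) - d) := by rw [Finset.sum_const, nsmul_eq_mul]
  have hm1 : ∀ u ∈ H, 1 ≤ (C.filter (fun v => ¬ G.Adj u v)).card := by
    intro u hu
    obtain ⟨v, hv, hnadj⟩ := hcov u hu
    exact Finset.card_pos.mpr ⟨v, mem_filter.mpr ⟨hv, hnadj⟩⟩
  have hnd : (0:ℝ) ≤ (n:ℝ) - d := by
    rw [hd]
    have h1 : (0:ℝ) ≤ (1/K) * n := by positivity
    have h2 : (0:ℝ) ≤ α * n := by positivity
    nlinarith
  -- C has exactly r-1 vertices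
  have hkeq : C.card = r - 1 := by
    by_contra hne'
    have hk2 : C.card ≤ r - 2 := by omega
    have hHle : (H.card : ℝ) ≤ (C.card : ℝ) * ((n:ℝ) - d) := by
      have hsub : H ⊆ C.biUnion (fun v => H.filter (fun u => ¬ G.Adj u v)) := by
        intro u hu
        obtain ⟨v, hv, hnadj⟩ := hcov u hu
        exact mem_biUnion.mpr ⟨v, hv, mem_filter.mpr ⟨hu, hnadj⟩⟩
      have h1 := (Finset.card_le_card hsub).trans Finset.card_biUnion_le
      calc (H.card : ℝ) ≤ (∑ v ∈ C, ((H.filter (fun u => ¬ G.Adj u v)).card) : ℕ) := by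
            exact_mod_cast h1
        _ = ∑ v ∈ C, ((H.filter (fun u => ¬ G.Adj u v)).card : ℝ) := by push_cast; ring
        _ ≤ ∑ v ∈ C, ((n:ℝ) - d) := Finset.sum_le_sum hnonadj
        _ = (C.card : ℝ) * ((n:ℝ) - d) := by rw [Finset.sum_const, nsmul_eq_mul]
    have hc2 : (C.card : ℝ) ≤ K - 1 := by
      have : ((C.card : ℕ) : ℝ) ≤ ((r - 2 : ℕ) : ℝ) := by exact_mod_cast hk2
      have h2 : ((r-2 : ℕ) : ℝ) = (r:ℝ) - 2 := by
        have : (2:ℕ) ≤ r := by omega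
        push_cast [this]; ring
      rw [h2] at this
      simp only [hKdef]; linarith
    have hα4 : α ≤ 1/(4*K^2) := hα0
    have hHd : (H.card : ℝ) ≤ (K - 1) * ((n:ℝ) - d) :=
      hHle.trans (mul_le_mul_of_nonneg_right hc2 hnd)
    rw [hd] at hHd
    have hK0' : K ≠ 0 := ne_of_gt hK0
    have e1 : (K-1)*((n:ℝ) - (1 - 1/K - 2*α)*n) = n - (1/K)*n + 2*K*(α*n) - 2*(α*n) := by
      field_simp
      ring
    have hy' : α*(n:ℝ) ≤ (1/(4*K^2))*n := mul_le_mul_of_nonneg_right hα4 (Nat.cast_nonneg n)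
    have e2 : 2*K*(α*(n:ℝ)) ≤ 2*K*((1/(4*K^2))*n) :=
      mul_le_mul_of_nonneg_left hy' (by linarith)
    have e3 : 2*K*((1/(4*K^2))*(n:ℝ)) = (1/(2*K))*n := by
      field_simp
      ring
    have e4 : (1/K)*(n:ℝ) = (1/(2*K))*n + (1/(2*K))*n := by
      field_simp
      ring
    have s1 : (1/K)*(n:ℝ) ≤ K + 2*K*(α*n) := by linarith
    have s3 : (1/(2*K))*(n:ℝ) ≤ K := by linarith
    have s4 : (2*K)*((1/(2*K))*(n:ℝ)) ≤ (2*K)*K := mul_le_mul_of_nonneg_left s3 (by linarith)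
    have e5 : (2*K)*((1/(2*K))*(n:ℝ)) = n := by field_simp
    have s5 : (n:ℝ) ≤ 2*K^2 := by
      calc (n:ℝ) = (2*K)*((1/(2*K))*(n:ℝ)) := e5.symm
        _ ≤ (2*K)*K := s4
        _ = 2*K^2 := by ring
    linarith [hn1, s5]
  -- Bad vertices: at least 2 non-neighbors in C
  set Bad : Finset (Fin n) := H.filter (fun u => 2 ≤ (C.filter (fun v => ¬ G.Adj u v)).card) with hBaddef
  have hBadsub : Bad ⊆ H := filter_subset _ _
  have hBadcount : H.card + Bad.card ≤ ∑ u ∈ H, (C.filter (fun v => ¬ G.Adj u v)).card := by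
    have h1 : ∀ u ∈ H, 1 + (if 2 ≤ (C.filter (fun v => ¬ G.Adj u v)).card then 1 else 0)
        ≤ (C.filter (fun v => ¬ G.Adj u v)).card := by
      intro u hu
      have := hm1 u hu
      split_ifs with h
      · omega
      · omega
    have h2 := Finset.sum_le_sum h1
    have h4 : ∑ u ∈ H, (1 + if 2 ≤ (C.filter (fun v => ¬ G.Adj u v)).card then 1 else 0)
        = H.card + Bad.card := by
      rw [Finset.sum_add_distrib, Finset.sum_const, smul_eq_mul, mul_one, hBaddef,
        Finset.card_filter]
      congr 1
      rw [Finset.card_filter]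
    rw [h4] at h2
    exact h2
  have hCK : (C.card : ℝ) = K := by rw [hkeq]; exact hKcast
  have hHBad : (H.card : ℝ) + (Bad.card : ℝ) ≤ K * ((n:ℝ) - d) := by
    have h1 : ((H.card + Bad.card : ℕ):ℝ)
        ≤ ((∑ u ∈ H, (C.filter (fun v => ¬ G.Adj u v)).card : ℕ):ℝ) := by
      exact_mod_cast hBadcount
    have h2 := h1.trans hsumle
    rw [hCK] at h2
    push_cast at h2
    linarith
  set Good : Finset (Fin n) := H \ Bad with hGooddef
  have hGoodcard : (Good.card : ℝ) = (H.card : ℝ) - (Bad.card : ℝ) := by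
    rw [hGooddef, Finset.card_sdiff_of_subset hBadsub]
    have h5 : Bad.card ≤ H.card := Finset.card_le_card hBadsub
    push_cast [h5]
    ring
  set B : Fin n → Finset (Fin n) := fun v => Good.filter (fun u => ¬ G.Adj u v) with hBdef
  have hGoodsub : Good ⊆ C.biUnion B := by
    intro u hu
    have huH : u ∈ H := (Finset.mem_sdiff.mp hu).1
    obtain ⟨v, hv, hnadj⟩ := hcov u huH
    exact mem_biUnion.mpr ⟨v, hv, mem_filter.mpr ⟨hu, hnadj⟩⟩
  have hCne : C.Nonempty := by
    rw [← Finset.card_pos, hkeq]; omega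
  obtain ⟨v, hvC, hvmax⟩ := Finset.exists_max_image C (fun v => (B v).card) hCne
  have hGB : (Good.card : ℝ) ≤ K * ((B v).card : ℝ) := by
    have h1 := (Finset.card_le_card hGoodsub).trans Finset.card_biUnion_le
    have h2 : ∑ w ∈ C, (B w).card ≤ C.card * (B v).card := by
      calc ∑ w ∈ C, (B w).card ≤ ∑ w ∈ C, (B v).card :=
            Finset.sum_le_sum (fun w hw => hvmax w hw)
        _ = C.card * (B v).card := by rw [Finset.sum_const, smul_eq_mul]
    have h3 : Good.card ≤ C.card * (B v).card := h1.trans h2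
    have h4 : ((Good.card : ℕ):ℝ) ≤ ((C.card * (B v).card : ℕ):ℝ) := by exact_mod_cast h3
    push_cast at h4
    rw [hCK] at h4
    exact h4
  -- B v is independent
  have hBind : ∀ u ∈ B v, ∀ w ∈ B v, ¬ G.Adj u w := by
    intro u hu w hw hadj
    have hune : u ≠ w := G.ne_of_adj hadj
    have key : ∀ z ∈ B v, ∀ x ∈ C, x ≠ v → G.Adj z x := by
      intro z hz x hx hxv
      by_contra hzx
      have hzGood : z ∈ Good := (mem_filter.mp hz).1
      have hznv : ¬ G.Adj z v := (mem_filter.mp hz).2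
      have h2 : ({x, v} : Finset (Fin n)) ⊆ C.filter (fun y => ¬ G.Adj z y) := by
        intro y hy
        rcases Finset.mem_insert.mp hy with h | h
        · subst h; exact mem_filter.mpr ⟨hx, hzx⟩
        · rw [Finset.mem_singleton] at h; subst h; exact mem_filter.mpr ⟨hvC, hznv⟩
      have h3 : 2 ≤ (C.filter (fun y => ¬ G.Adj z y)).card := by
        calc 2 = ({x, v} : Finset (Fin n)).card := (Finset.card_pair hxv).symm
          _ ≤ _ := Finset.card_le_card h2
      have h4 : z ∈ Bad := mem_filter.mpr ⟨(Finset.mem_sdiff.mp hzGood).1, h3⟩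
      exact (Finset.mem_sdiff.mp hzGood).2 h4
    have hu' := key u hu
    have hw' := key w hw
    have hunC : u ∉ C.erase v := fun h =>
      G.irrefl (hu' u (Finset.mem_of_mem_erase h) (Finset.ne_of_mem_erase h))
    have hwnC : w ∉ C.erase v := fun h =>
      G.irrefl (hw' w (Finset.mem_of_mem_erase h) (Finset.ne_of_mem_erase h))
    have hCe : G.IsClique ↑(C.erase v) :=
      hC.subset (Finset.coe_subset.mpr (Finset.erase_subset v C))
    have h1 : G.IsClique ↑(insert w (C.erase v)) := by
      rw [coe_insert]
      exact hCe.insert (fun x hx _ =>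
        hw' x (Finset.mem_of_mem_erase hx) (Finset.ne_of_mem_erase hx))
    have h2 : G.IsClique ↑(insert u (insert w (C.erase v))) := by
      rw [coe_insert]
      apply h1.insert
      intro x hx _
      rcases Finset.mem_insert.mp (by exact_mod_cast hx) with h | h
      · subst h; exact hadj
      · exact hu' x (Finset.mem_of_mem_erase h) (Finset.ne_of_mem_erase h)
    have huni : u ∉ insert w (C.erase v) := by
      simp only [Finset.mem_insert]
      push_neg
      exact ⟨hune, hunC⟩
    have hT : G.IsNClique r (insert u (insert w (C.erase v))) := by
      refine ⟨h2, ?_⟩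
      rw [Finset.card_insert_of_notMem huni, Finset.card_insert_of_notMem hwnC,
        Finset.card_erase_of_mem hvC, hkeq]
      omega
    exact hfree _ hT
  refine ⟨B v, ?_, hBind⟩
  -- final arithmetic
  have hK0' : K ≠ 0 := ne_of_gt hK0
  have e1 : K * ((n:ℝ) - d) = (n:ℝ) + 2*K*(α*n) := by
    rw [hd]; field_simp; ring
  have c1 : (n:ℝ) - 2*K - 2*K*(α*(n:ℝ)) ≤ K * ((B v).card : ℝ) := by
    rw [e1] at hHBad
    linarith [hGB, hGoodcard, hHcard, hHBad]
  have f1 : (r:ℝ)*2 ≤ (r:ℝ)*(α*n) := by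
    apply mul_le_mul_of_nonneg_left hn2
    positivity
  have f2 : 2*(α*(n:ℝ)) ≤ (r:ℝ)*(α*n) := by
    apply mul_le_mul_of_nonneg_right (by linarith : (2:ℝ) ≤ (r:ℝ))
    positivity
  have c2 : 2 + 2*(α*(n:ℝ)) ≤ 3*((r:ℝ)*(α*n)) := by
    have hX : (6:ℝ) ≤ (r:ℝ)*(α*n) := by linarith only [f1, hr3]
    linarith only [hX, f2]
  have c3 : K*(2 + 2*(α*(n:ℝ))) ≤ K*(3*((r:ℝ)*(α*n))) :=
    mul_le_mul_of_nonneg_left c2 (le_of_lt hK0)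
  have eq1 : ((1/K) - 3*(r:ℝ)*α)*(n:ℝ) * K = (n:ℝ) - 3*K*((r:ℝ)*(α*n)) := by
    have hKK : K * (1/K) = 1 := mul_one_div_cancel hK0'
    linear_combination (n:ℝ) * hKK
  have hfin : (1 / ((r : ℝ) - 1) - 3 * (r : ℝ) * α) * (n : ℝ) * K ≤ ((B v).card : ℝ) * K := by
    rw [show (1 / ((r : ℝ) - 1) - 3 * (r : ℝ) * α) = ((1/K) - 3*(r:ℝ)*α) from by rw [hKdef], eq1]
    linarith only [c1, c3]
  exact le_of_mul_le_mul_right hfin hK0
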